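/- Let P ⊆ ℝ³ be a convex polyhedron with 0 in its interior, let q ∈ ∂P, and let w be a unit vector for which there exists ε > 0 with q + t·w ∈ P for all t ∈ [0, ε]. Then there exists a boundary-tangent direction v of P at q (a unit vector with q + t·v ∈ ∂P for all small t ≥ 0) such that ⟪q, v⟫ ≥ ⟪q, w⟫. (This is the step used in the uniqueness argument for the extended gradient: the maximum of the one-sided directional derivative of the radial distance over the full tangent cone of P at q is attained at a direction tangent to the boundary.) -/

import Mathlib

open scoped RealInnerProductSpace
open Set

private theorem key_ineq (c b r N : ℝ) (hb : 0 ≤ b) (hc : c^2 ≤ r^2) (hN : 0 ≤ N)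
    (hN2 : N^2 = 1 + 2*b*c + b^2*r^2) : c * N ≤ c + b * r^2 := by
  rcases lt_trichotomy c 0 with h|h|h
  · rcases le_or_gt 0 (c + b*r^2) with h2|h2
    · nlinarith [mul_nonneg (neg_nonneg.2 h.le) hN]
    · have h3 : 0 ≤ b*(r^2-c^2)*(-(2*c+b*r^2)) :=
        mul_nonneg (mul_nonneg hb (sub_nonneg.2 hc)) (by nlinarith)
      have key : (-(c + b*r^2))^2 ≤ ((-c)*N)^2 := by nlinarith
      have := le_of_pow_le_pow_left₀ two_ne_zero
        (mul_nonneg (neg_nonneg.2 h.le) hN) key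
      linarith
  · subst h; nlinarith
  · have h3 : 0 ≤ b*(r^2-c^2)*(2*c+b*r^2) :=
      mul_nonneg (mul_nonneg hb (sub_nonneg.2 hc)) (by nlinarith)
    have key : (c*N)^2 ≤ (c + b*r^2)^2 := by nlinarith
    have := le_of_pow_le_pow_left₀ two_ne_zero (by positivity : (0:ℝ) ≤ c + b*r^2) key
    linarith

private theorem seg_mem {E : Type*} [NormedAddCommGroup E] [NormedSpace ℝ E]
    {A : Set E} (hA : Convex ℝ A) {q x v : E} (hq : q ∈ A) (hx : x ∈ A)
    {c : ℝ} (hc : 0 < c) (hd : x = q + c • v) {s : ℝ} (hs : s ∈ Set.Icc 0 c) :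
    q + s • v ∈ A := by
  have h1 : 0 ≤ s / c := div_nonneg hs.1 hc.le
  have h2 : s / c ≤ 1 := (div_le_one hc).2 hs.2
  have hmem := hA hq hx (by linarith : (0:ℝ) ≤ 1 - s/c) h1 (by ring)
  have heq : (1 - s/c) • q + (s/c) • x = q + s • v := by
    rw [hd, smul_add, smul_smul, div_mul_cancel₀ s hc.ne']
    module
  rwa [heq] at hmem

private theorem face_lemma (S : Set (EuclideanSpace ℝ (Fin 3))) (hSfin : S.Finite)
    (P : Set (EuclideanSpace ℝ (Fin 3))) (hP : P = convexHull ℝ S)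
    (h0 : (0 : EuclideanSpace ℝ (Fin 3)) ∈ interior P)
    {y : EuclideanSpace ℝ (Fin 3)} (hy : y ∈ frontier P) :
    ∃ T : Set (EuclideanSpace ℝ (Fin 3)), T ⊆ S ∧ y ∈ convexHull ℝ T ∧
      convexHull ℝ T ⊆ frontier P := by
  classical
  have hPc : Convex ℝ P := hP ▸ convex_convexHull ℝ S
  have hcl : IsClosed P := hP ▸ (hSfin.isCompact_convexHull ℝ).isClosed
  have hyP : y ∈ P := by have h := hy.1; rwa [hcl.closure_eq] at h
  obtain ⟨f, hf⟩ := geometric_hahn_banach_open_point hPc.interior isOpen_interior hy.2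
  have hfP : ∀ p ∈ P, f p ≤ f y := by
    intro p hp
    have hcontf : Continuous fun b : ℝ => f (b • p) :=
      f.continuous.comp (continuous_id.smul continuous_const)
    have htend : Filter.Tendsto (fun b : ℝ => f (b • p)) (nhdsWithin 1 (Iio 1))
        (nhds (f p)) := by
      have h1 := (hcontf.tendsto 1).mono_left (nhdsWithin_le_nhds (s := Iio 1))
      simpa using h1
    refine le_of_tendsto htend ?_
    filter_upwards [Ioo_mem_nhdsLT_of_mem (show (1:ℝ) ∈ Ioc 0 1 by norm_num)] with b hb
    have hbp : b • p ∈ interior P := by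
      have h2 := hPc.combo_interior_self_mem_interior h0 hp
        (show (0:ℝ) < 1 - b by linarith [hb.2]) hb.1.le (by ring)
      simpa using h2
    exact (hf _ hbp).le
  set M := f y with hM
  refine ⟨{s | s ∈ S ∧ f s = M}, fun s hs => hs.1, ?_, ?_⟩
  · set F := hSfin.toFinset with hF
    have hSF : (F : Set (EuclideanSpace ℝ (Fin 3))) = S := hSfin.coe_toFinset
    have hyS : y ∈ convexHull ℝ (F : Set (EuclideanSpace ℝ (Fin 3))) := by
      rw [hSF, ← hP]; exact hyP
    rw [Finset.convexHull_eq] at hyS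
    obtain ⟨wt, hw0, hw1, hcm⟩ := hyS
    have hcm' : ∑ s ∈ F, wt s • (id s : EuclideanSpace ℝ (Fin 3)) = y := by
      rw [← Finset.centerMass_eq_of_sum_1 _ _ hw1]; exact hcm
    have hfy : ∑ s ∈ F, wt s * f s = M := by
      have := congrArg f hcm'
      rw [map_sum] at this
      simpa [map_smul] using this
    have hle : ∀ s ∈ F, f s ≤ M := by
      intro s hs
      refine hfP s ?_
      rw [hP]
      exact subset_convexHull ℝ S (hSfin.mem_toFinset.1 hs)
    have hsum0 : ∑ s ∈ F, wt s * (M - f s) = 0 := by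
      have : ∑ s ∈ F, wt s * (M - f s)
          = M * (∑ s ∈ F, wt s) - ∑ s ∈ F, wt s * f s := by
        rw [Finset.mul_sum, ← Finset.sum_sub_distrib]
        congr 1; ext s; ring
      rw [this, hw1, hfy]; ring
    have hzero : ∀ s ∈ F, wt s ≠ 0 → f s = M := by
      intro s hs hws
      have h := (Finset.sum_eq_zero_iff_of_nonneg
        (fun s hs => mul_nonneg (hw0 s hs) (sub_nonneg.2 (hle s hs)))).1 hsum0 s hs
      rcases mul_eq_zero.1 h with h'|h'
      · exact absurd h' hws
      · linarith [sub_eq_zero.1 h']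
    set F' := F.filter (fun s => wt s ≠ 0) with hF'
    have hcmF' : F'.centerMass wt id = y := by
      rw [hF', Finset.centerMass_filter_ne_zero]; exact hcm
    have hmem : y ∈ convexHull ℝ (F' : Set (EuclideanSpace ℝ (Fin 3))) := by
      rw [← hcmF']
      refine Finset.centerMass_id_mem_convexHull F'
        (fun s hs => hw0 s (Finset.mem_of_mem_filter s hs)) ?_
      have hsum' : ∑ s ∈ F', wt s = 1 := by
        rw [hF', Finset.sum_filter_ne_zero]; exact hw1
      rw [hsum']; norm_num
    refine convexHull_mono ?_ hmem
    intro s hs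
    simp only [hF', Finset.coe_filter, mem_setOf_eq] at hs
    exact ⟨hSfin.mem_toFinset.1 hs.1, hzero s hs.1 hs.2⟩
  · intro z hz
    have hzP : z ∈ P := by
      rw [hP]
      exact convexHull_mono (fun s hs => hs.1) hz
    have hconv : Convex ℝ {x : EuclideanSpace ℝ (Fin 3) | f x = M} := by
      have := (convex_singleton M).linear_preimage (f : EuclideanSpace ℝ (Fin 3) →ₗ[ℝ] ℝ)
      exact this
    have hfz : f z = M := convexHull_min (fun s hs => hs.2) hconv hz
    exact ⟨subset_closure hzP, fun hzint => absurd hfz (ne_of_lt (hf z hzint))⟩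

private theorem tangent_main (S : Set (EuclideanSpace ℝ (Fin 3))) (hSfin : S.Finite)
    (P : Set (EuclideanSpace ℝ (Fin 3))) (hP : P = convexHull ℝ S)
    (h0 : (0 : EuclideanSpace ℝ (Fin 3)) ∈ interior P)
    (q : EuclideanSpace ℝ (Fin 3)) (hq : q ∈ frontier P)
    (w : EuclideanSpace ℝ (Fin 3)) (hw : ‖w‖ = 1)
    (hwin : ∃ ε > (0 : ℝ), ∀ t ∈ Set.Icc (0 : ℝ) ε, q + t • w ∈ P)
    (hpar : ∀ k : ℝ, w ≠ k • q) :
    ∃ v : EuclideanSpace ℝ (Fin 3), ‖v‖ = 1 ∧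
      (∃ ε > (0 : ℝ), ∀ t ∈ Set.Icc (0 : ℝ) ε, q + t • v ∈ frontier P) ∧
      ⟪q, w⟫ ≤ ⟪q, v⟫ := by
  classical
  obtain ⟨ε, hε, hseg⟩ := hwin
  have hPc : Convex ℝ P := hP ▸ convex_convexHull ℝ S
  have hcomp : IsCompact P := hP ▸ hSfin.isCompact_convexHull ℝ
  have hcl : IsClosed P := hcomp.isClosed
  have hnhds : P ∈ nhds (0 : EuclideanSpace ℝ (Fin 3)) := mem_interior_iff_mem_nhds.1 h0
  have habs : Absorbent ℝ P := absorbent_nhds_zero hnhds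
  have hbdd : Bornology.IsVonNBounded ℝ P := (NormedSpace.isVonNBounded_iff ℝ).2 hcomp.isBounded
  have hgq : gauge P q = 1 := (gauge_eq_one_iff_mem_frontier hPc hnhds).2 hq
  -- the curve
  set g : ℝ → ℝ := fun t => gauge P (q + t • w) with hgdef
  set xf : ℝ → EuclideanSpace ℝ (Fin 3) := fun t => (g t)⁻¹ • (q + t • w) with hxfdef
  have hne : ∀ t : ℝ, 0 < t → q + t • w ≠ 0 := by
    intro t ht h
    have : w = (-t⁻¹) • q := by
      have h1 : t • w = -q := by
        have := congrArg (fun z => z - q) h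
        simpa [add_sub_cancel_left] using this
      have := congrArg (fun z => t⁻¹ • z) h1
      simpa [smul_smul, inv_mul_cancel₀ ht.ne', neg_smul] using this
    exact hpar _ this
  have hgpos : ∀ t ∈ Ioc (0:ℝ) ε, 0 < g t := by
    intro t ht
    exact (gauge_pos habs hbdd).2 (hne t ht.1)
  have hgle : ∀ t ∈ Ioc (0:ℝ) ε, g t ≤ 1 := by
    intro t ht
    exact gauge_le_one_of_mem (hseg t ⟨ht.1.le, ht.2⟩)
  have hxfr : ∀ t ∈ Ioc (0:ℝ) ε, xf t ∈ frontier P := by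
    intro t ht
    have hp := hgpos t ht
    refine (gauge_eq_one_iff_mem_frontier hPc hnhds).1 ?_
    rw [hxfdef]
    simp only
    rw [gauge_smul_of_nonneg (inv_nonneg.2 hp.le), smul_eq_mul]
    exact inv_mul_cancel₀ hp.ne'
  -- continuity of xf at 0
  have hg0 : g 0 = 1 := by simpa [hgdef] using hgq
  have hgcont : Continuous g := by
    exact (continuous_gauge hPc hnhds).comp (continuous_const.add (continuous_id.smul continuous_const))
  have hxcont : ContinuousAt xf 0 := by
    refine ContinuousAt.fun_smul ?_ ?_
    · exact (hgcont.continuousAt).inv₀ (by rw [hg0]; norm_num)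
    · exact (continuous_const.add (continuous_id.smul continuous_const)).continuousAt
  have hxf0 : xf 0 = q := by simp [hxfdef, hg0]
  -- the sequence
  set ts : ℕ → ℝ := fun n => ε / (n + 1) with hts
  have htsmem : ∀ n : ℕ, ts n ∈ Ioc (0:ℝ) ε := by
    intro n
    constructor
    · positivity
    · rw [div_le_iff₀ (by positivity)]
      nlinarith [Nat.cast_nonneg (α := ℝ) n]
  have Hface : ∀ n : ℕ, ∃ T : Set (EuclideanSpace ℝ (Fin 3)), T ⊆ S ∧
      xf (ts n) ∈ convexHull ℝ T ∧ convexHull ℝ T ⊆ frontier P :=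
    fun n => face_lemma S hSfin P hP h0 (hxfr (ts n) (htsmem n))
  choose T hT1 hT2 hT3 using Hface
  -- pigeonhole
  haveI : Finite ↥{A : Set (EuclideanSpace ℝ (Fin 3)) | A ⊆ S} :=
    hSfin.finite_subsets.to_subtype
  obtain ⟨T₀s, hfib⟩ := Finite.exists_infinite_fiber
    (fun n : ℕ => (⟨T n, hT1 n⟩ : {A : Set (EuclideanSpace ℝ (Fin 3)) | A ⊆ S}))
  set T₀ : Set (EuclideanSpace ℝ (Fin 3)) := T₀s.1 with hT₀
  have hinf : {n : ℕ | T n = T₀}.Infinite := by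
    refine Set.Infinite.mono ?_ (Set.infinite_coe_iff.1 hfib)
    intro n hn
    exact congrArg Subtype.val hn
  have hT₀fr : convexHull ℝ T₀ ⊆ frontier P := by
    obtain ⟨n, hn⟩ := hinf.nonempty
    exact hn ▸ hT3 n
  have hT₀fin : T₀.Finite := hSfin.subset T₀s.2
  -- q ∈ convexHull T₀
  have hqT₀ : q ∈ convexHull ℝ T₀ := by
    rw [← (hT₀fin.isCompact_convexHull ℝ).isClosed.closure_eq]
    rw [Metric.mem_closure_iff]
    intro δ hδ
    obtain ⟨η, hη, hcont⟩ := Metric.continuousAt_iff.1 hxcont δ hδ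
    obtain ⟨N, hN⟩ := exists_nat_gt (ε / η)
    obtain ⟨n, hn, hNn⟩ := hinf.exists_gt N
    refine ⟨xf (ts n), hn ▸ hT2 n, ?_⟩
    have hd0 : dist (ts n) 0 < η := by
      rw [Real.dist_eq, sub_zero, abs_of_pos (htsmem n).1]
      rw [div_lt_iff₀ (by positivity)]
      have h1 : ε / η < N := hN
      have h2 : ε < η * N := by
        rw [div_lt_iff₀ hη] at h1; linarith
      have h3 : (N:ℝ) < n + 1 := by exact_mod_cast Nat.lt_succ_of_lt hNn
      nlinarith
    have := hcont hd0
    rw [hxf0] at this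
    rw [dist_comm]
    exact this
  -- pick a point
  obtain ⟨n₀, hn₀⟩ := hinf.nonempty
  set t₀ : ℝ := ts n₀ with ht₀
  have ht₀mem : t₀ ∈ Ioc (0:ℝ) ε := htsmem n₀
  have hxmem : xf t₀ ∈ convexHull ℝ T₀ := hn₀ ▸ hT2 n₀
  set γ : ℝ := g t₀ with hγ
  have hγpos : 0 < γ := hgpos t₀ ht₀mem
  have hγle : γ ≤ 1 := hgle t₀ ht₀mem
  set b : ℝ := (1 - γ) / t₀ with hb
  have hbnn : 0 ≤ b := div_nonneg (by linarith) ht₀mem.1.le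
  set u : EuclideanSpace ℝ (Fin 3) := w + b • q with hu
  set a : ℝ := t₀ / γ with ha
  have hapos : 0 < a := div_pos ht₀mem.1 hγpos
  have hd : xf t₀ = q + a • u := by
    rw [hxfdef]
    simp only
    rw [hu, ha, hb]
    have ht0ne : t₀ ≠ 0 := ht₀mem.1.ne'
    have hγne : γ ≠ 0 := hγpos.ne'
    rw [← hγ]
    match_scalars
    · field_simp
      ring
    · field_simp
  have hune : u ≠ 0 := by
    intro h
    have : w = (-b) • q := by
      have := congrArg (fun z => z - b • q) h
      simpa [hu, add_sub_cancel_right, neg_smul] using this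
    exact hpar _ this
  set v : EuclideanSpace ℝ (Fin 3) := ‖u‖⁻¹ • u with hv
  have hvnorm : ‖v‖ = 1 := norm_smul_inv_norm hune
  have hunorm : 0 < ‖u‖ := norm_pos_iff.2 hune
  have hd' : xf t₀ = q + (a * ‖u‖) • v := by
    rw [hd, hv, smul_smul]
    congr 2
    field_simp
  refine ⟨v, hvnorm, ⟨a * ‖u‖, by positivity, ?_⟩, ?_⟩
  · intro s hs
    exact hT₀fr (seg_mem (convex_convexHull ℝ T₀) hqT₀ hxmem (by positivity) hd' hs)
  · -- inner product inequality
    have hr : |⟪q, w⟫| ≤ ‖q‖ := by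
      have := abs_real_inner_le_norm q w
      rwa [hw, mul_one] at this
    have hc2 : ⟪q, w⟫^2 ≤ ‖q‖^2 := by
      rw [← sq_abs]
      exact pow_le_pow_left₀ (abs_nonneg _) hr 2
    have hN2 : ‖u‖^2 = 1 + 2*b*⟪q, w⟫ + b^2*‖q‖^2 := by
      rw [hu, norm_add_sq_real, hw, real_inner_smul_right, norm_smul, real_inner_comm]
      rw [mul_pow, Real.norm_eq_abs, sq_abs]
      ring
    have hkey := key_ineq ⟪q, w⟫ b ‖q‖ ‖u‖ hbnn hc2 (norm_nonneg u) hN2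
    have hiv : ⟪q, v⟫ = ‖u‖⁻¹ * ⟪q, u⟫ := by
      rw [hv, real_inner_smul_right]
    have hiu : ⟪q, u⟫ = ⟪q, w⟫ + b * ‖q‖^2 := by
      rw [hu, inner_add_right, real_inner_smul_right, real_inner_self_eq_norm_sq]
    rw [hiv, hiu, ← sub_nonneg]
    have heq : ‖u‖⁻¹ * (⟪q, w⟫ + b * ‖q‖^2) - ⟪q, w⟫
        = ‖u‖⁻¹ * ((⟪q, w⟫ + b * ‖q‖^2) - ⟪q, w⟫ * ‖u‖) := by
      field_simp
    rw [heq]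
    exact mul_nonneg (inv_nonneg.2 (norm_nonneg u)) (by linarith)

/-- for a convex polyhedron `P` with `0` in its interior, a boundary point
`q`, and any unit vector `w` pointing into `P` at `q`, there is a boundary-tangent
direction `v` of `P` at `q` with `⟪q, v⟫ ≥ ⟪q, w⟫`: the maximum of the one-sided
directional derivative of the radial distance over the tangent cone is attained at a
direction tangent to the boundary. -/
theorem exists_boundary_tangent_direction_ge
    (S : Set (EuclideanSpace ℝ (Fin 3))) (hSfin : S.Finite)
    (P : Set (EuclideanSpace ℝ (Fin 3))) (hP : P = convexHull ℝ S)
    (h0 : (0 : EuclideanSpace ℝ (Fin 3)) ∈ interior P)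
    (q : EuclideanSpace ℝ (Fin 3)) (hq : q ∈ frontier P)
    (w : EuclideanSpace ℝ (Fin 3)) (hw : ‖w‖ = 1)
    (hwin : ∃ ε > (0 : ℝ), ∀ t ∈ Set.Icc (0 : ℝ) ε, q + t • w ∈ P) :
    ∃ v : EuclideanSpace ℝ (Fin 3), ‖v‖ = 1 ∧
      (∃ ε > (0 : ℝ), ∀ t ∈ Set.Icc (0 : ℝ) ε, q + t • v ∈ frontier P) ∧
      ⟪q, w⟫ ≤ ⟪q, v⟫ := by
  classical
  by_cases hpar : ∀ k : ℝ, w ≠ k • q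
  · exact tangent_main S hSfin P hP h0 q hq w hw hwin hpar
  push_neg at hpar
  obtain ⟨k, hk⟩ := hpar
  -- setup
  have hPc : Convex ℝ P := hP ▸ convex_convexHull ℝ S
  have hcl : IsClosed P := hP ▸ (hSfin.isCompact_convexHull ℝ).isClosed
  have hnhds : P ∈ nhds (0 : EuclideanSpace ℝ (Fin 3)) := mem_interior_iff_mem_nhds.1 h0
  have hqP : q ∈ P := by have h := hq.1; rwa [hcl.closure_eq] at h
  have hq0 : q ≠ 0 := by
    intro h
    exact hq.2 (h ▸ h0)
  have hr : 0 < ‖q‖ := norm_pos_iff.2 hq0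
  have hgq : gauge P q = 1 := (gauge_eq_one_iff_mem_frontier hPc hnhds).2 hq
  obtain ⟨ε, hε, hseg⟩ := hwin
  -- k is negative and ⟪q, w⟫ = -‖q‖
  have hknorm : |k| * ‖q‖ = 1 := by
    rw [← Real.norm_eq_abs, ← norm_smul, ← hk, hw]
  have hkneg : k < 0 := by
    rcases lt_trichotomy k 0 with h|h|h
    · exact h
    · exfalso; rw [h] at hknorm; simp at hknorm
    · exfalso
      have hmem := hseg ε ⟨hε.le, le_refl ε⟩
      have hg : gauge P (q + ε • w) ≤ 1 := gauge_le_one_of_mem hmem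
      have heq : q + ε • w = (1 + ε * k) • q := by
        rw [hk, smul_smul]
        module
      rw [heq, gauge_smul_of_nonneg (by nlinarith : (0:ℝ) ≤ 1 + ε * k), smul_eq_mul, hgq] at hg
      nlinarith
  have hqw : ⟪q, w⟫ = -‖q‖ := by
    have h1 : ⟪q, w⟫ = k * ‖q‖^2 := by
      rw [hk, real_inner_smul_right, real_inner_self_eq_norm_sq]
    have h2 : k * ‖q‖ = -1 := by
      rw [abs_of_neg hkneg] at hknorm
      linarith [hknorm]
    rw [h1, pow_two, ← mul_assoc, h2]
    ring
  -- orthogonal unit vector e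
  have hspan : (ℝ ∙ q)ᗮ ≠ ⊥ := by
    intro h
    rw [Submodule.orthogonal_eq_bot_iff] at h
    have h1 : Module.finrank ℝ (ℝ ∙ q) = 1 := finrank_span_singleton hq0
    rw [h, finrank_top] at h1
    simp [finrank_euclideanSpace] at h1
  obtain ⟨e₀, he₀mem, he₀⟩ := Submodule.exists_mem_ne_zero_of_ne_bot hspan
  set e : EuclideanSpace ℝ (Fin 3) := ‖e₀‖⁻¹ • e₀ with he
  have henorm : ‖e‖ = 1 := norm_smul_inv_norm he₀
  have hqe : ⟪q, e⟫ = 0 := by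
    have h1 : ⟪q, e₀⟫ = 0 :=
      (Submodule.mem_orthogonal _ _).1 he₀mem q (Submodule.mem_span_singleton_self q)
    rw [he, real_inner_smul_right, h1, mul_zero]
  -- a nearby interior point
  have hhalf : (2⁻¹ : ℝ) • q ∈ interior P := by
    have h1 := hPc.combo_interior_self_mem_interior h0 hqP
      (show (0:ℝ) < 2⁻¹ by norm_num) (show (0:ℝ) ≤ 2⁻¹ by norm_num) (by norm_num)
    simpa using h1
  obtain ⟨δ, hδpos, hball⟩ := Metric.isOpen_iff.1 isOpen_interior _ hhalf
  set p : EuclideanSpace ℝ (Fin 3) := (2⁻¹ : ℝ) • q + (δ/2) • e with hpdef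
  have hpP : p ∈ P := by
    refine interior_subset (hball ?_)
    rw [Metric.mem_ball, dist_eq_norm, hpdef, add_sub_cancel_left, norm_smul, henorm,
      Real.norm_eq_abs, abs_of_pos (by positivity), mul_one]
    linarith
  set dv : EuclideanSpace ℝ (Fin 3) := p - q with hdv
  have hqe' : ⟪e, q⟫ = 0 := by rw [real_inner_comm]; exact hqe
  have hedv : ⟪e, dv⟫ = δ/2 := by
    rw [hdv, hpdef, inner_sub_right, inner_add_right, real_inner_smul_right,
      real_inner_smul_right, hqe', real_inner_self_eq_norm_sq, henorm]
    ring
  have hdvne : dv ≠ 0 := by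
    intro h
    rw [h, inner_zero_right] at hedv
    linarith
  have hdvnorm : 0 < ‖dv‖ := norm_pos_iff.2 hdvne
  set w' : EuclideanSpace ℝ (Fin 3) := ‖dv‖⁻¹ • dv with hw'
  have hw'norm : ‖w'‖ = 1 := norm_smul_inv_norm hdvne
  have hpd : p = q + ‖dv‖ • w' := by
    rw [hw', smul_smul, mul_inv_cancel₀ hdvnorm.ne', one_smul, hdv]
    abel
  have hw'seg : ∀ t ∈ Set.Icc (0:ℝ) ‖dv‖, q + t • w' ∈ P :=
    fun t ht => seg_mem hPc hqP hpP hdvnorm hpd ht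
  have hpar' : ∀ k' : ℝ, w' ≠ k' • q := by
    intro k' h
    have h1 : ⟪e, w'⟫ = ‖dv‖⁻¹ * (δ/2) := by
      rw [hw', real_inner_smul_right, hedv]
    rw [h, real_inner_smul_right, hqe', mul_zero] at h1
    have : (0:ℝ) < ‖dv‖⁻¹ * (δ/2) := by positivity
    linarith
  obtain ⟨v, hv1, hv2, _⟩ := tangent_main S hSfin P hP h0 q hq w' hw'norm
    ⟨‖dv‖, hdvnorm, hw'seg⟩ hpar'
  refine ⟨v, hv1, hv2, ?_⟩
  rw [hqw]
  have := abs_real_inner_le_norm q v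
  rw [hv1, mul_one] at this
  have := abs_le.1 this
  linarith [this.1]
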